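/- Let n be a nonnegative integer, (Ω, ≤) a linearly ordered set, and C a set of at most n subsets of Ω each of which is convex with respect to ≤. Then the smallest patchwork on Ω containing C has at most 2n² − n + 2 elements. -/

import Mathlib

/-- A subset `A` is convex with respect to an order relation `le` if whenever
`p ≤ q ≤ r` with `p ∈ A` and `r ∈ A`, also `q ∈ A`. -/
def IsConvex {Ω : Type*} (le : Ω → Ω → Prop) (A : Set Ω) : Prop :=
  ∀ p q r : Ω, le p q → le q r → p ∈ A → r ∈ A → q ∈ A

/-- Two subsets overlap if they have nonempty intersection and neither contains the other. -/
def Overlap {Ω : Type*} (A B : Set Ω) : Prop :=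
  (A ∩ B).Nonempty ∧ ¬ A ⊆ B ∧ ¬ B ⊆ A

/-- A patchwork on `Ω` is a set of subsets of `Ω` containing `∅` and `Ω` and closed under
intersection, union and difference of overlapping pairs. -/
def IsPatchwork {Ω : Type*} (P : Set (Set Ω)) : Prop :=
  ∅ ∈ P ∧ Set.univ ∈ P ∧
    ∀ A ∈ P, ∀ B ∈ P, Overlap A B → A ∩ B ∈ P ∧ A ∪ B ∈ P ∧ A \ B ∈ P

/-- A member of a patchwork is autonomous if it is nonempty and overlaps no member. -/
def Autonomous {Ω : Type*} (P : Set (Set Ω)) (A : Set Ω) : Prop :=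
  A ∈ P ∧ A.Nonempty ∧ ∀ B ∈ P, ¬ Overlap A B

/-- The cohort under `B`: the maximal autonomous proper subsets of `B`. -/
def Cohort {Ω : Type*} (P : Set (Set Ω)) (B : Set Ω) : Set (Set Ω) :=
  {A | Autonomous P A ∧ A ⊂ B ∧ ∀ C, Autonomous P C → C ⊂ B → A ⊆ C → A = C}

/-- Two members of a patchwork are adjacent if they are disjoint and their union is a member. -/
def Adjacent {Ω : Type*} (P : Set (Set Ω)) (A B : Set Ω) : Prop :=
  Disjoint A B ∧ A ∪ B ∈ P

/-- The smallest patchwork on `Ω` containing `C`. -/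
def patchworkClosure {Ω : Type*} (C : Set (Set Ω)) : Set (Set Ω) :=
  ⋂₀ {P | IsPatchwork P ∧ C ⊆ P}

theorem statement17 {Ω : Type*} [LinearOrder Ω] (n : ℕ) (C : Set (Set Ω))
    (hC : C.encard ≤ (n : ℕ∞)) (hconv : ∀ A ∈ C, IsConvex (· ≤ · : Ω → Ω → Prop) A) :
    (patchworkClosure C).encard ≤ ((2 * n ^ 2 - n + 2 : ℕ) : ℕ∞) := by
  classical
  have chain : ∀ s t : Set Ω, IsLowerSet s → IsLowerSet t → s ⊆ t ∨ t ⊆ s := by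
    intro s t hs ht
    by_cases h : s ⊆ t
    · exact Or.inl h
    · right
      rw [Set.not_subset] at h
      obtain ⟨x, hxs, hxt⟩ := h
      intro y hy
      rcases le_total y x with h' | h'
      · exact hs h' hxs
      · exact absurd (ht h' hy) hxt
  set lo : Set Ω → Set Ω := fun A => {x | ∃ a ∈ A, x ≤ a} with hlo
  set hi : Set Ω → Set Ω := fun A => {x | ∃ a ∈ A, a ≤ x} with hhi
  set K : Set (Set Ω) := lo '' C ∪ (fun A => (hi A)ᶜ) '' C with hKdef
  have hKlow : ∀ s ∈ K, IsLowerSet s := by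
    rintro s (⟨A, hA, rfl⟩ | ⟨A, hA, rfl⟩)
    · rintro a b hba ⟨c, hc, hac⟩
      exact ⟨c, hc, hba.trans hac⟩
    · intro a b hba ha hb
      obtain ⟨c, hc, hcb⟩ := hb
      exact ha ⟨c, hc, hcb.trans hba⟩
  have hKfin : K.Finite := by
    rw [← Set.encard_lt_top_iff]
    have h1 : K.encard ≤ C.encard + C.encard := by
      refine le_trans (Set.encard_union_le _ _) ?_
      exact add_le_add (Set.encard_image_le _ _) (Set.encard_image_le _ _)
    have hCfin : C.encard < ⊤ :=
      lt_of_le_of_lt hC (by exact_mod_cast WithTop.coe_lt_top n)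
    calc K.encard ≤ C.encard + C.encard := h1
      _ < ⊤ := by
          rw [ENat.add_lt_top]
          exact ⟨hCfin, hCfin⟩
  set KF : Finset (Set Ω) := hKfin.toFinset with hKF
  set TF : Finset (Set Ω × Set Ω) := (KF ×ˢ KF).filter (fun p => p.2 ⊂ p.1) with hTF
  set P : Set (Set Ω) :=
    insert (∅ : Set Ω) (insert Set.univ
      ((fun p : Set Ω × Set Ω => p.1 \ p.2) '' (↑TF : Set (Set Ω × Set Ω)))) with hP
  have memP : ∀ D ∈ K, ∀ E ∈ K, D \ E ∈ P := by
    intro D hD E hE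
    by_cases hDE : D ⊆ E
    · have h0 : D \ E = ∅ := Set.diff_eq_empty.mpr hDE
      rw [h0]; exact Set.mem_insert _ _
    · have hED : E ⊆ D := (chain D E (hKlow D hD) (hKlow E hE)).resolve_left hDE
      apply Set.mem_insert_of_mem
      apply Set.mem_insert_of_mem
      refine ⟨(D, E), ?_, rfl⟩
      rw [Finset.mem_coe, hTF, Finset.mem_filter, Finset.mem_product]
      refine ⟨⟨?_, ?_⟩, ⟨hED, hDE⟩⟩
      · rw [hKF, hKfin.mem_toFinset]; exact hD
      · rw [hKF, hKfin.mem_toFinset]; exact hE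
  have hCP : C ⊆ P := by
    intro A hA
    have hrep : A = lo A \ (hi A)ᶜ := by
      ext x
      simp only [Set.mem_diff, Set.mem_compl_iff, not_not, hlo, hhi, Set.mem_setOf_eq]
      constructor
      · intro hx; exact ⟨⟨x, hx, le_rfl⟩, ⟨x, hx, le_rfl⟩⟩
      · rintro ⟨⟨r, hr, hxr⟩, ⟨p, hp, hpx⟩⟩
        exact hconv A hA p x r hpx hxr hp hr
    rw [hrep]
    exact memP _ (Or.inl ⟨A, hA, rfl⟩) _ (Or.inr ⟨A, hA, rfl⟩)
  have getRep : ∀ X ∈ P, X ≠ ∅ → X ≠ Set.univ →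
      ∃ D E, D ∈ K ∧ E ∈ K ∧ X = D \ E := by
    intro X hX h1 h2
    rw [hP] at hX
    simp only [Set.mem_insert_iff, Set.mem_image, Finset.mem_coe] at hX
    rcases hX with rfl | rfl | ⟨p, hp, rfl⟩
    · exact absurd rfl h1
    · exact absurd rfl h2
    · rw [hTF, Finset.mem_filter, Finset.mem_product, hKF, hKfin.mem_toFinset,
        hKfin.mem_toFinset] at hp
      exact ⟨p.1, p.2, hp.1.1, hp.1.2, rfl⟩
  have hPpatch : IsPatchwork P := by
    refine ⟨Set.mem_insert _ _, Set.mem_insert_of_mem _ (Set.mem_insert _ _), ?_⟩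
    intro A hA B hB hov
    obtain ⟨⟨w, hwA, hwB⟩, hAB, hBA⟩ := hov
    have hAne : A ≠ ∅ := by rintro rfl; exact hwA
    have hAnu : A ≠ Set.univ := by rintro rfl; exact hBA (Set.subset_univ B)
    have hBne : B ≠ ∅ := by rintro rfl; exact hwB
    have hBnu : B ≠ Set.univ := by rintro rfl; exact hAB (Set.subset_univ A)
    obtain ⟨D₁, E₁, hD₁, hE₁, rfl⟩ := getRep A hA hAne hAnu
    obtain ⟨D₂, E₂, hD₂, hE₂, rfl⟩ := getRep B hB hBne hBnu
    have hLD1 := hKlow _ hD₁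
    have hLD2 := hKlow _ hD₂
    have hLE1 := hKlow _ hE₁
    have hLE2 := hKlow _ hE₂
    refine ⟨?_, ?_, ?_⟩
    · -- intersection
      have hid : (D₁ \ E₁) ∩ (D₂ \ E₂) = (D₁ ∩ D₂) \ (E₁ ∪ E₂) := by
        ext x; simp only [Set.mem_inter_iff, Set.mem_diff, Set.mem_union]; tauto
      rw [hid]
      have hD : D₁ ∩ D₂ ∈ K := by
        rcases chain D₁ D₂ hLD1 hLD2 with h | h
        · rw [Set.inter_eq_self_of_subset_left h]; exact hD₁
        · rw [Set.inter_eq_self_of_subset_right h]; exact hD₂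
      have hE : E₁ ∪ E₂ ∈ K := by
        rcases chain E₁ E₂ hLE1 hLE2 with h | h
        · rw [Set.union_eq_self_of_subset_left h]; exact hE₂
        · rw [Set.union_eq_self_of_subset_right h]; exact hE₁
      exact memP _ hD _ hE
    · -- union
      have key : (D₁ \ E₁) ∪ (D₂ \ E₂) = (D₁ ∪ D₂) \ (E₁ ∩ E₂) := by
        apply Set.Subset.antisymm
        · rintro x (⟨h1, h2⟩ | ⟨h1, h2⟩)
          · exact ⟨Or.inl h1, fun h => h2 h.1⟩
          · exact ⟨Or.inr h1, fun h => h2 h.2⟩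
        · rintro x ⟨hxD, hxE⟩
          by_contra hx
          have hxA : x ∉ D₁ \ E₁ := fun h => hx (Or.inl h)
          have hxB : x ∉ D₂ \ E₂ := fun h => hx (Or.inr h)
          rcases hxD with h1 | h1
          · have hxE1 : x ∈ E₁ := by by_contra hc; exact hxA ⟨h1, hc⟩
            have hxE2 : x ∉ E₂ := fun hc => hxE ⟨hxE1, hc⟩
            have hxD2 : x ∉ D₂ := fun hc => hxB ⟨hc, hxE2⟩
            have hxw : x ≤ w := by
              rcases le_total x w with h | h
              · exact h
              · exact absurd (hLE1 h hxE1) hwA.2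
            exact hxD2 (hLD2 hxw hwB.1)
          · have hxE2 : x ∈ E₂ := by by_contra hc; exact hxB ⟨h1, hc⟩
            have hxE1 : x ∉ E₁ := fun hc => hxE ⟨hc, hxE2⟩
            have hxD1 : x ∉ D₁ := fun hc => hxA ⟨hc, hxE1⟩
            have hxw : x ≤ w := by
              rcases le_total x w with h | h
              · exact h
              · exact absurd (hLE2 h hxE2) hwB.2
            exact hxD1 (hLD1 hxw hwA.1)
      rw [key]
      have hD : D₁ ∪ D₂ ∈ K := by
        rcases chain D₁ D₂ hLD1 hLD2 with h | h
        · rw [Set.union_eq_self_of_subset_left h]; exact hD₂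
        · rw [Set.union_eq_self_of_subset_right h]; exact hD₁
      have hE : E₁ ∩ E₂ ∈ K := by
        rcases chain E₁ E₂ hLE1 hLE2 with h | h
        · rw [Set.inter_eq_self_of_subset_left h]; exact hE₁
        · rw [Set.inter_eq_self_of_subset_right h]; exact hE₂
      exact memP _ hD _ hE
    · -- difference
      rw [Set.not_subset] at hBA
      obtain ⟨b, hbB, hbA⟩ := hBA
      by_cases hbE1 : b ∈ E₁
      · have key : (D₁ \ E₁) \ (D₂ \ E₂) = D₁ \ (E₁ ∪ D₂) := by
          apply Set.Subset.antisymm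
          · rintro x ⟨⟨hxD1, hxE1⟩, hxB⟩
            refine ⟨hxD1, ?_⟩
            rintro (h | h)
            · exact hxE1 h
            · have hxE2 : x ∈ E₂ := by by_contra hc; exact hxB ⟨h, hc⟩
              have hxb : x ≤ b := by
                rcases le_total x b with h' | h'
                · exact h'
                · exact absurd (hLE2 h' hxE2) hbB.2
              exact hxE1 (hLE1 hxb hbE1)
          · rintro x ⟨hxD1, hx⟩
            exact ⟨⟨hxD1, fun h => hx (Or.inl h)⟩, fun h => hx (Or.inr h.1)⟩
        rw [key]
        have hE : E₁ ∪ D₂ ∈ K := by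
          rcases chain E₁ D₂ hLE1 hLD2 with h | h
          · rw [Set.union_eq_self_of_subset_left h]; exact hD₂
          · rw [Set.union_eq_self_of_subset_right h]; exact hE₁
        exact memP _ hD₁ _ hE
      · have hbD1 : b ∉ D₁ := fun h => hbA ⟨h, hbE1⟩
        have key : (D₁ \ E₁) \ (D₂ \ E₂) = (D₁ ∩ E₂) \ E₁ := by
          apply Set.Subset.antisymm
          · rintro x ⟨⟨hxD1, hxE1⟩, hxB⟩
            refine ⟨⟨hxD1, ?_⟩, hxE1⟩
            by_contra hxE2
            have hxD2 : x ∉ D₂ := fun h => hxB ⟨h, hxE2⟩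
            have hbx : b ≤ x := by
              rcases le_total b x with h' | h'
              · exact h'
              · exact absurd (hLD2 h' hbB.1) hxD2
            exact hbD1 (hLD1 hbx hxD1)
          · rintro x ⟨⟨hxD1, hxE2⟩, hxE1⟩
            exact ⟨⟨hxD1, hxE1⟩, fun h => h.2 hxE2⟩
        rw [key]
        have hD : D₁ ∩ E₂ ∈ K := by
          rcases chain D₁ E₂ hLD1 hLE2 with h | h
          · rw [Set.inter_eq_self_of_subset_left h]; exact hD₁
          · rw [Set.inter_eq_self_of_subset_right h]; exact hE₂
        exact memP _ hD _ hE₁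
  have hsub : patchworkClosure C ⊆ P := Set.sInter_subset_of_mem ⟨hPpatch, hCP⟩
  -- cardinality of TF
  have hKcard : KF.card ≤ 2 * n := by
    have h1 : (KF.card : ℕ∞) ≤ ((2 * n : ℕ) : ℕ∞) := by
      rw [hKF, ← hKfin.encard_eq_coe_toFinset_card]
      calc K.encard ≤ C.encard + C.encard :=
            le_trans (Set.encard_union_le _ _)
              (add_le_add (Set.encard_image_le _ _) (Set.encard_image_le _ _))
        _ ≤ (n : ℕ∞) + (n : ℕ∞) := add_le_add hC hC
        _ = ((2 * n : ℕ) : ℕ∞) := by push_cast; ring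
    exact_mod_cast h1
  set TF' : Finset (Set Ω × Set Ω) := (KF ×ˢ KF).filter (fun p => p.1 ⊂ p.2) with hTF'
  have hcardswap : TF.card = TF'.card := by
    apply Finset.card_bij (fun p _ => Prod.swap p)
    · intro p hp
      rw [hTF, Finset.mem_filter, Finset.mem_product] at hp
      rw [hTF', Finset.mem_filter, Finset.mem_product]
      exact ⟨⟨hp.1.2, hp.1.1⟩, hp.2⟩
    · intro p hp q hq h
      exact Prod.swap_injective h
    · intro p hp
      rw [hTF', Finset.mem_filter, Finset.mem_product] at hp
      refine ⟨Prod.swap p, ?_, by simp⟩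
      rw [hTF, Finset.mem_filter, Finset.mem_product]
      exact ⟨⟨hp.1.2, hp.1.1⟩, hp.2⟩
  have hdisj : Disjoint TF TF' := by
    rw [Finset.disjoint_left]
    intro p hp hp'
    rw [hTF, Finset.mem_filter] at hp
    rw [hTF', Finset.mem_filter] at hp'
    exact absurd hp'.2 hp.2.asymm
  have hsubOff : TF ∪ TF' ⊆ KF.offDiag := by
    intro p hp
    rcases Finset.mem_union.mp hp with h | h
    · rw [hTF, Finset.mem_filter, Finset.mem_product] at h
      exact Finset.mem_offDiag.mpr ⟨h.1.1, h.1.2, h.2.ne'⟩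
    · rw [hTF', Finset.mem_filter, Finset.mem_product] at h
      exact Finset.mem_offDiag.mpr ⟨h.1.1, h.1.2, h.2.ne⟩
  have hcount : TF.card + TF'.card ≤ KF.card * KF.card - KF.card := by
    rw [← Finset.offDiag_card, ← Finset.card_union_of_disjoint hdisj]
    exact Finset.card_le_card hsubOff
  have hTFcard : TF.card ≤ 2 * n ^ 2 - n := by
    set m := KF.card with hm
    have hmm : m ≤ m * m := by
      rcases Nat.eq_zero_or_pos m with h | h
      · simp [h]
      · exact Nat.le_mul_of_pos_left _ h
    rw [← hcardswap] at hcount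
    have h3 : TF.card + TF.card + m ≤ m * m := (Nat.le_sub_iff_add_le hmm).mp hcount
    rcases Nat.eq_zero_or_pos n with rfl | hn
    · interval_cases m <;> omega
    · have h1 : n ≤ 2 * n ^ 2 := by nlinarith
      rw [Nat.le_sub_iff_add_le h1]
      nlinarith [hKcard]
  -- final count
  calc (patchworkClosure C).encard ≤ P.encard := Set.encard_mono hsub
    _ ≤ (insert Set.univ ((fun p : Set Ω × Set Ω => p.1 \ p.2) ''
          (↑TF : Set (Set Ω × Set Ω)))).encard + 1 := Set.encard_insert_le _ _
    _ ≤ (((fun p : Set Ω × Set Ω => p.1 \ p.2) ''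
          (↑TF : Set (Set Ω × Set Ω))).encard + 1) + 1 :=
        add_le_add (Set.encard_insert_le _ _) le_rfl
    _ ≤ ((↑TF : Set (Set Ω × Set Ω)).encard + 1) + 1 :=
        add_le_add (add_le_add (Set.encard_image_le _ _) le_rfl) le_rfl
    _ = ((TF.card : ℕ∞) + 1) + 1 := by rw [Set.encard_coe_eq_coe_finsetCard]
    _ ≤ (((2 * n ^ 2 - n : ℕ) : ℕ∞) + 1) + 1 := by
        exact add_le_add (add_le_add (by exact_mod_cast hTFcard) le_rfl) le_rfl
    _ = ((2 * n ^ 2 - n + 2 : ℕ) : ℕ∞) := by push_cast; ring
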